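/- Suppose c = (c_1,…,c_q) is a point on the simplex with two distinct indices k ≠ ℓ such that c_k = c_ℓ > 1/β, and c_k + γ ≤ 1 where γ := c_k - 1/β. Then t ↦ F_β(c + γt(e_ℓ - e_k)) is strictly decreasing on (0,1), where F_β(x) = -(1/2)|x|² + (1/β)∑ x_m log x_m. -/

import Mathlib

open Real Finset Set

/-- From any simplex point `c` with two equal coordinates `c k = c ℓ > 1/β`,
the map `t ↦ F_β(c + γ t (e_ℓ - e_k))` with `γ = c k - 1/β` is strictly
decreasing on `(0,1)`. -/
theorem descent_from_C4_point (q : ℕ) (hq : 2 ≤ q) (β : ℝ) (hβ : 0 < β)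
    (F : (Fin q → ℝ) → ℝ)
    (hF : ∀ x : Fin q → ℝ,
      F x = -(1 / 2) * (∑ m, (x m) ^ 2) + (1 / β) * ∑ m, x m * Real.log (x m))
    (c : Fin q → ℝ) (hcpos : ∀ m, 0 < c m) (hcsum : ∑ m, c m = 1)
    (k ℓ : Fin q) (hkl : k ≠ ℓ) (hckl : c k = c ℓ) (hck : 1 / β < c k)
    (γ : ℝ) (hγ : γ = c k - 1 / β) (hlt : c ℓ + γ < 1) :
    StrictAntiOn (fun t : ℝ => F (fun m => c m + γ * t *
      ((if m = ℓ then 1 else 0) - (if m = k then 1 else 0))))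
      (Set.Ioo (0 : ℝ) 1) := by
  have hβ' : 0 < 1 / β := by positivity
  have hγpos : 0 < γ := by rw [hγ]; linarith
  set d : Fin q → ℝ := fun m => (if m = ℓ then 1 else 0) - (if m = k then 1 else 0) with hd
  have hdℓ : d ℓ = 1 := by simp [hd, hkl.symm]
  have hdk : d k = -1 := by simp [hd, hkl]
  simp only [hF]
  have hder : ∀ t ∈ Set.Ioo (0:ℝ) 1, HasDerivAt
      (fun s => -(1/2) * (∑ m, (c m + γ * s * d m) ^ 2)
        + (1/β) * ∑ m, (c m + γ * s * d m) * Real.log (c m + γ * s * d m))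
      (-(1/2) * (∑ m, 2 * (c m + γ * t * d m) * (γ * d m))
        + (1/β) * ∑ m, (Real.log (c m + γ * t * d m) + 1) * (γ * d m)) t := by
    intro t ht
    obtain ⟨ht0, ht1⟩ := ht
    have hupos : ∀ m, 0 < c m + γ * t * d m := by
      intro m
      by_cases hmk : m = k
      · rw [hmk, hdk]
        have hγ' : γ ≤ c k - 1/β := le_of_eq hγ
        nlinarith
      · by_cases hmℓ : m = ℓ
        · rw [hmℓ, hdℓ]; have := hcpos ℓ; nlinarith
        · have hdm : d m = 0 := by simp [hd, hmk, hmℓ]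
          rw [hdm]; simpa using hcpos m
    have hum : ∀ m, HasDerivAt (fun s => c m + γ * s * d m) (γ * d m) t := by
      intro m
      simpa using (((hasDerivAt_id t).const_mul γ).mul_const (d m)).const_add (c m)
    have hsq : ∀ m ∈ Finset.univ, HasDerivAt (fun s => (c m + γ * s * d m) ^ 2)
        (2 * (c m + γ * t * d m) * (γ * d m)) t := by
      intro m _
      have h : HasDerivAt (fun s => (c m + γ * s * d m) ^ 2)
          ((2:ℕ) * (c m + γ * t * d m) ^ (2 - 1) * (γ * d m)) t := (hum m).fun_pow 2
      convert h using 1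
      push_cast
      norm_num
    have hlog : ∀ m ∈ Finset.univ, HasDerivAt
        (fun s => (c m + γ * s * d m) * Real.log (c m + γ * s * d m))
        ((Real.log (c m + γ * t * d m) + 1) * (γ * d m)) t := by
      intro m _
      exact (Real.hasDerivAt_mul_log (ne_of_gt (hupos m))).comp t (hum m)
    exact ((HasDerivAt.fun_sum hsq).const_mul (-(1/2))).add ((HasDerivAt.fun_sum hlog).const_mul (1/β))
  apply strictAntiOn_of_deriv_neg (convex_Ioo 0 1)
  · intro t ht
    exact (hder t ht).continuousAt.continuousWithinAt
  · rw [interior_Ioo]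
    intro t ht
    rw [(hder t ht).deriv]
    obtain ⟨ht0, ht1⟩ := ht
    set A := c ℓ + γ * t with hA
    set B := c k - γ * t with hB
    have hAd : c ℓ + γ * t * d ℓ = A := by rw [hdℓ]; ring
    have hBd : c k + γ * t * d k = B := by rw [hdk]; ring
    have hs1 : (∑ m, 2 * (c m + γ * t * d m) * (γ * d m)) = 2 * A * γ - 2 * B * γ := by
      have he : ∀ m, 2 * (c m + γ * t * d m) * (γ * d m)
          = (if m = ℓ then 2 * A * γ else 0) - (if m = k then 2 * B * γ else 0) := by
        intro m
        by_cases hmk : m = k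
        · rw [hmk, if_neg hkl, if_pos rfl, hBd, hdk]; ring
        · by_cases hmℓ : m = ℓ
          · rw [hmℓ, if_pos rfl, if_neg (Ne.symm hkl), hAd, hdℓ]; ring
          · have hdm : d m = 0 := by simp [hd, hmk, hmℓ]
            rw [if_neg hmℓ, if_neg hmk, hdm]; ring
      simp [he, Finset.sum_sub_distrib, Finset.sum_ite_eq']
    have hs2 : (∑ m, (Real.log (c m + γ * t * d m) + 1) * (γ * d m))
        = (Real.log A + 1) * γ - (Real.log B + 1) * γ := by
      have he : ∀ m, (Real.log (c m + γ * t * d m) + 1) * (γ * d m)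
          = (if m = ℓ then (Real.log A + 1) * γ else 0)
            - (if m = k then (Real.log B + 1) * γ else 0) := by
        intro m
        by_cases hmk : m = k
        · rw [hmk, if_neg hkl, if_pos rfl, hBd, hdk]; ring
        · by_cases hmℓ : m = ℓ
          · rw [hmℓ, if_pos rfl, if_neg (Ne.symm hkl), hAd, hdℓ]; ring
          · have hdm : d m = 0 := by simp [hd, hmk, hmℓ]
            rw [if_neg hmℓ, if_neg hmk, hdm]; ring
      simp [he, Finset.sum_sub_distrib, Finset.sum_ite_eq']
    rw [hs1, hs2]
    have hBgt : (1 : ℝ) / β < B := by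
      rw [hB]
      have hγ' : γ = c k - 1/β := hγ
      nlinarith
    have hB0 : 0 < B := lt_trans hβ' hBgt
    have hAB : B < A := by rw [hA, hB]; nlinarith [hckl]
    have hlog_le : Real.log A - Real.log B ≤ (A - B) / B := by
      rw [← Real.log_div (ne_of_gt (lt_trans hB0 hAB)) (ne_of_gt hB0)]
      have h1 := Real.log_le_sub_one_of_pos (div_pos (lt_trans hB0 hAB) hB0)
      calc Real.log (A / B) ≤ A / B - 1 := h1
        _ = (A - B) / B := by field_simp
    have hkey : (1/β) * (Real.log A - Real.log B) < A - B := by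
      have h2 : (1/β) * (Real.log A - Real.log B) ≤ (1/β) * ((A - B) / B) :=
        mul_le_mul_of_nonneg_left hlog_le (le_of_lt hβ')
      have h3 : (1/β) * ((A - B) / B) < A - B := by
        have hq0 : 0 < (A - B) / B := div_pos (by linarith) hB0
        have hx := mul_lt_mul_of_pos_left hBgt hq0
        have hy : (A - B) / B * B = A - B := div_mul_cancel₀ _ (ne_of_gt hB0)
        calc (1/β) * ((A - B) / B) = (A - B) / B * (1/β) := by ring
          _ < (A - B) / B * B := hx
          _ = A - B := hy
      linarith
    nlinarith [hkey]
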